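/- Let G and H be graphs with G connected and |G| ≥ σ(H). Then R(G,H) ≥ (|G|−1)(χ(H)−1) + σ(H). -/

import Mathlib

open SimpleGraph

/-- Graph `A` contains a copy of graph `B`, i.e. a subgraph isomorphic to `B`. -/
def ContainsCopy {α β : Type*} (A : SimpleGraph α) (B : SimpleGraph β) : Prop :=
  ∃ f : β ↪ α, ∀ x y : β, B.Adj x y → A.Adj (f x) (f y)

/-- The Ramsey number `R(G, H)`: the smallest `N` such that every red-blue coloring of the
edges of `K_N` (identified with its graph of red edges; the blue edges formftered the complement)
contains a red copy of `G` or a blue copy of `H`. -/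
noncomputable def ramsey {α β : Type*} (G : SimpleGraph α) (H : SimpleGraph β) : ℕ :=
  sInf {N : ℕ | ∀ red : SimpleGraph (Fin N), ContainsCopy red G ∨ ContainsCopy redᶜ H}

/-- `σ(H)` relative to `k`: the minimum possible size of a color class over all proper
vertex colorings of `H` with `k` colors. -/
noncomputable def minColorClass {β : Type*} [Fintype β] (H : SimpleGraph β) (k : ℕ) : ℕ :=
  sInf {s : ℕ | ∃ C : H.Coloring (Fin k), ∃ i : Fin k, s = Nat.card {v : β // C v = i}}

/-! ### Auxiliary lemmas -/

lemma comap_compl' {V W : Type*} (G : SimpleGraph V) (f : W ↪ V) :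
    (SimpleGraph.comap (⇑f) G)ᶜ = SimpleGraph.comap (⇑f) Gᶜ := by
  ext x y
  simp only [compl_adj, comap_adj, ne_eq, EmbeddingLike.apply_eq_iff_eq]

lemma containsCopy_comap {γ V W : Type*} (R : SimpleGraph W) (B : SimpleGraph γ) (f : V ↪ W)
    (h : ContainsCopy (SimpleGraph.comap (⇑f) R) B) : ContainsCopy R B := by
  obtain ⟨g, hg⟩ := h
  exact ⟨g.trans f, fun x y hxy => hg x y hxy⟩

/-! ### Finite Ramsey theorem -/

private def Rnum : ℕ → ℕ → ℕ
  | 0, _ => 0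
  | _+1, 0 => 0
  | m+1, n+1 => Rnum m (n+1) + Rnum (m+1) n + 1

private lemma clique_lift {V : Type} [Fintype V] (G : SimpleGraph V) (A : Finset V) (q : ℕ)
    (h : ∃ s : Finset {u // u ∈ A}, s.card = q ∧
      (↑s : Set {u // u ∈ A}).Pairwise (SimpleGraph.comap (⇑(Function.Embedding.subtype _)) G).Adj) :
    ∃ s : Finset V, s ⊆ A ∧ s.card = q ∧ (↑s : Set V).Pairwise G.Adj := by
  obtain ⟨s, hcard, hp⟩ := h
  refine ⟨s.map (Function.Embedding.subtype _), ?_, by simp [hcard], ?_⟩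
  · intro x hx
    simp only [Finset.mem_map, Function.Embedding.coe_subtype] at hx
    obtain ⟨⟨u, hu⟩, _, rfl⟩ := hx
    exact hu
  · intro a ha b hb hab
    simp only [Finset.coe_map, Set.mem_image, Finset.mem_coe,
      Function.Embedding.coe_subtype] at ha hb
    obtain ⟨x, hx, rfl⟩ := ha
    obtain ⟨y, hy, rfl⟩ := hb
    have hxy : x ≠ y := fun h => hab (by rw [h])
    exact hp hx hy hxy

private lemma ramsey_clique : ∀ p m n : ℕ, m + n ≤ p → ∀ (V : Type) [Fintype V]
    (red : SimpleGraph V), Rnum m n ≤ Fintype.card V →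
    (∃ s : Finset V, s.card = m ∧ (↑s : Set V).Pairwise red.Adj) ∨
    (∃ s : Finset V, s.card = n ∧ (↑s : Set V).Pairwise redᶜ.Adj) := by
  intro p
  induction p with
  | zero =>
    intro m n hmn V _ red _
    obtain ⟨rfl, rfl⟩ : m = 0 ∧ n = 0 := by omega
    exact Or.inl ⟨∅, by simp⟩
  | succ p ih =>
    intro m n hmn V _ red hcard
    match m, n with
    | 0, n => exact Or.inl ⟨∅, by simp⟩
    | m+1, 0 => exact Or.inr ⟨∅, by simp⟩
    | m+1, n+1 =>
      classical
      rw [show Rnum (m+1) (n+1) = Rnum m (n+1) + Rnum (m+1) n + 1 from by rw [Rnum]] at hcard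
      have hpos : 0 < Fintype.card V := by omega
      obtain ⟨v⟩ := Fintype.card_pos_iff.mp hpos
      set A : Finset V := Finset.univ.filter (red.Adj v) with hA
      set B : Finset V := Finset.univ.filter (redᶜ.Adj v) with hB
      have hvA : v ∉ A := by simp [hA]
      have hBcompl : B = (insert v A)ᶜ := by
        ext u
        simp only [hA, hB, compl_adj, Finset.mem_filter, Finset.mem_univ, true_and,
          Finset.mem_compl, Finset.mem_insert, not_or]
        constructor
        · rintro ⟨h1, h2⟩; exact ⟨fun h => h1 h.symm, h2⟩
        · rintro ⟨h1, h2⟩; exact ⟨fun h => h1 h.symm, h2⟩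
      have hcards : A.card + B.card + 1 = Fintype.card V := by
        have h1 : (insert v A).card = A.card + 1 := by
          rw [Finset.card_insert_of_notMem hvA]
        have h2 : B.card = Fintype.card V - (A.card + 1) := by
          rw [hBcompl, Finset.card_compl, h1]
        have h3 : (insert v A).card ≤ Fintype.card V := Finset.card_le_univ _
        omega
      have hsplit : Rnum m (n+1) ≤ A.card ∨ Rnum (m+1) n ≤ B.card := by omega
      -- helper facts
      have hadjA : ∀ u ∈ A, red.Adj v u := by intro u hu; simpa [hA] using hu
      have hadjB : ∀ u ∈ B, redᶜ.Adj v u := by intro u hu; simpa [hB] using hu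
      rcases hsplit with hAc | hBc
      · -- many red neighbors
        have := ih m (n+1) (by omega) {u // u ∈ A}
          (SimpleGraph.comap (⇑(Function.Embedding.subtype _)) red)
          (by rwa [Fintype.card_coe])
        rcases this with ⟨s', hs'⟩ | ⟨s', hs'⟩
        · -- red clique of size m inside A; add v
          obtain ⟨s, hsub, hcard', hp⟩ := clique_lift red A m ⟨s', hs'⟩
          have hvs : v ∉ s := fun h => (red.loopless.irrefl v) (hadjA v (hsub h))
          refine Or.inl ⟨insert v s, ?_, ?_⟩
          · rw [Finset.card_insert_of_notMem hvs, hcard']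
          · rw [Finset.coe_insert]
            haveI := red.symm; rw [Set.pairwise_insert_of_symmetric]
            exact ⟨hp, fun b hb _ => hadjA b (hsub hb)⟩
        · -- blue clique of size n+1 inside A
          rw [comap_compl'] at hs'
          obtain ⟨s, _, hcard', hp⟩ := clique_lift redᶜ A (n+1) ⟨s', hs'⟩
          exact Or.inr ⟨s, hcard', hp⟩
      · -- many blue neighbors
        have := ih (m+1) n (by omega) {u // u ∈ B}
          (SimpleGraph.comap (⇑(Function.Embedding.subtype _)) red)
          (by rwa [Fintype.card_coe])
        rcases this with ⟨s', hs'⟩ | ⟨s', hs'⟩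
        · -- red clique of size m+1 inside B
          obtain ⟨s, _, hcard', hp⟩ := clique_lift red B (m+1) ⟨s', hs'⟩
          exact Or.inl ⟨s, hcard', hp⟩
        · -- blue clique of size n inside B; add v
          rw [comap_compl'] at hs'
          obtain ⟨s, hsub, hcard', hp⟩ := clique_lift redᶜ B n ⟨s', hs'⟩
          have hvs : v ∉ s := fun h => (redᶜ.loopless.irrefl v) (hadjB v (hsub h))
          refine Or.inr ⟨insert v s, ?_, ?_⟩
          · rw [Finset.card_insert_of_notMem hvs, hcard']
          · rw [Finset.coe_insert]
            haveI := redᶜ.symm; rw [Set.pairwise_insert_of_symmetric]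
            exact ⟨hp, fun b hb _ => hadjB b (hsub hb)⟩

private lemma containsCopy_of_clique {γ : Type*} [Fintype γ] {V : Type} (R : SimpleGraph V)
    (B : SimpleGraph γ) (s : Finset V) (hcard : s.card = Fintype.card γ)
    (hp : (↑s : Set V).Pairwise R.Adj) : ContainsCopy R B := by
  have hce : Fintype.card γ = Fintype.card {u // u ∈ s} := by
    rw [Fintype.card_coe, hcard]
  let e : γ ≃ {u // u ∈ s} := Fintype.equivOfCardEq hce
  refine ⟨e.toEmbedding.trans (Function.Embedding.subtype _), fun x y hxy => ?_⟩
  have hne : x ≠ y := B.ne_of_adj hxy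
  have hne' : (↑(e x) : V) ≠ ↑(e y) :=
    fun h => hne (e.injective (Subtype.coe_injective h))
  exact hp (e x).2 (e y).2 hne'

private lemma ramsey_set_nonempty {α β : Type*} [Fintype α] [Fintype β]
    (G : SimpleGraph α) (H : SimpleGraph β) :
    {N : ℕ | ∀ red : SimpleGraph (Fin N), ContainsCopy red G ∨ ContainsCopy redᶜ H}.Nonempty := by
  refine ⟨Rnum (Fintype.card α) (Fintype.card β), fun red => ?_⟩
  have := ramsey_clique (Fintype.card α + Fintype.card β) (Fintype.card α) (Fintype.card β)
    le_rfl (Fin (Rnum (Fintype.card α) (Fintype.card β))) red (by simp)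
  rcases this with ⟨s, hcard, hp⟩ | ⟨s, hcard, hp⟩
  · exact Or.inl (containsCopy_of_clique red G s hcard hp)
  · exact Or.inr (containsCopy_of_clique redᶜ H s hcard hp)

/-! ### The extremal coloring -/

section Bad

variable (m n' s' : ℕ)

private def part : (Fin m × Fin n') ⊕ Fin s' → Fin (m+1) :=
  Sum.elim (fun p => p.1.castSucc) (fun _ => Fin.last m)

private def badRed : SimpleGraph ((Fin m × Fin n') ⊕ Fin s') where
  Adj x y := x ≠ y ∧ part m n' s' x = part m n' s' y
  symm := ⟨fun x y ⟨h1, h2⟩ => ⟨h1.symm, h2.symm⟩⟩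
  loopless := ⟨fun x ⟨h, _⟩ => h rfl⟩

private lemma badRed_compl_adj (x y : (Fin m × Fin n') ⊕ Fin s') :
    (badRed m n' s')ᶜ.Adj x y ↔ part m n' s' x ≠ part m n' s' y := by
  constructor
  · rintro ⟨hne, hnadj⟩ hp
    exact hnadj ⟨hne, hp⟩
  · intro hp
    exact ⟨fun h => hp (by rw [h]), fun h => hp h.2⟩

variable {m n' s'}

private def fiberInl (i₀ : Fin m) :
    {w : (Fin m × Fin n') ⊕ Fin s' // part m n' s' w = i₀.castSucc} → Fin n'
  | ⟨.inl p, _⟩ => p.2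
  | ⟨.inr _, h⟩ => absurd h (Fin.castSucc_lt_last i₀).ne'

private lemma fiberInl_inj (i₀ : Fin m) : Function.Injective (fiberInl (n' := n') (s' := s') i₀) := by
  rintro ⟨(⟨i1, j1⟩ | j1), h1⟩ ⟨(⟨i2, j2⟩ | j2), h2⟩ h
  · have e1 : i1 = i₀ := Fin.castSucc_injective _ h1
    have e2 : i2 = i₀ := Fin.castSucc_injective _ h2
    simp only [fiberInl] at h
    subst e1; subst e2; subst h; rfl
  · exact absurd h2 (Fin.castSucc_lt_last i₀).ne'
  · exact absurd h1 (Fin.castSucc_lt_last i₀).ne'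
  · exact absurd h1 (Fin.castSucc_lt_last i₀).ne'

private def fiberInr :
    {w : (Fin m × Fin n') ⊕ Fin s' // part m n' s' w = Fin.last m} → Fin s'
  | ⟨.inr j, _⟩ => j
  | ⟨.inl p, h⟩ => absurd h (Fin.castSucc_lt_last p.1).ne

private lemma fiberInr_inj : Function.Injective (fiberInr (m := m) (n' := n') (s' := s')) := by
  rintro ⟨(⟨i1, j1⟩ | j1), h1⟩ ⟨(⟨i2, j2⟩ | j2), h2⟩ h
  · exact absurd h1 (Fin.castSucc_lt_last i1).ne
  · exact absurd h1 (Fin.castSucc_lt_last i1).ne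
  · exact absurd h2 (Fin.castSucc_lt_last i2).ne
  · simp only [fiberInr] at h
    subst h; rfl

private lemma no_red_copy {α : Type*} [Fintype α] (G : SimpleGraph α) (hG : G.Connected)
    (hn : n' < Fintype.card α) (hs : s' ≤ n') : ¬ ContainsCopy (badRed m n' s') G := by
  rintro ⟨f, hf⟩
  obtain ⟨v₀⟩ := hG.nonempty
  have key : ∀ v, part m n' s' (f v) = part m n' s' (f v₀) := by
    intro v
    obtain ⟨w⟩ := hG.preconnected v v₀
    induction w with
    | nil => rfl
    | cons h p ih => exact ((hf _ _ h).2).trans ih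
  rcases Fin.eq_castSucc_or_eq_last (part m n' s' (f v₀)) with ⟨i₀, hc⟩ | hc
  · have hinj : Function.Injective (fun v : α => fiberInl i₀ ⟨f v, (key v).trans hc⟩) := by
      intro a b hab
      exact f.injective (congrArg Subtype.val (fiberInl_inj i₀ hab))
    have := Fintype.card_le_of_injective _ hinj
    simp only [Fintype.card_fin] at this
    omega
  · have hinj : Function.Injective (fun v : α => fiberInr ⟨f v, (key v).trans hc⟩) := by
      intro a b hab
      exact f.injective (congrArg Subtype.val (fiberInr_inj hab))
    have := Fintype.card_le_of_injective _ hinj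
    simp only [Fintype.card_fin] at this
    omega

private lemma no_blue_copy {β : Type*} [Fintype β] (H : SimpleGraph β)
    (hs : s' < minColorClass H (m+1)) : ¬ ContainsCopy (badRed m n' s')ᶜ H := by
  rintro ⟨f, hf⟩
  have hprop : ∀ x y, H.Adj x y → part m n' s' (f x) ≠ part m n' s' (f y) :=
    fun x y h => (badRed_compl_adj m n' s' _ _).1 (hf x y h)
  let C : H.Coloring (Fin (m+1)) :=
    SimpleGraph.Coloring.mk (fun v => part m n' s' (f v)) (fun {x y} h => hprop x y h)
  have hmem : Nat.card {v : β // C v = Fin.last m} ∈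
      {s : ℕ | ∃ C : H.Coloring (Fin (m+1)), ∃ i : Fin (m+1),
        s = Nat.card {v : β // C v = i}} := ⟨C, Fin.last m, rfl⟩
  have h1 : minColorClass H (m+1) ≤ Nat.card {v : β // C v = Fin.last m} := Nat.sInf_le hmem
  have h2 : Nat.card {v : β // C v = Fin.last m} ≤ s' := by
    have hinj : Function.Injective
        (fun v : {v : β // C v = Fin.last m} => fiberInr (m := m) (n' := n') ⟨f v.1, v.2⟩) := by
      intro a b hab
      exact Subtype.ext (f.injective (congrArg Subtype.val (fiberInr_inj hab)))
    have := Nat.card_le_card_of_injective _ hinj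
    simpa using this
  omega

end Bad

/-- If `G` is connected and `|G| ≥ σ(H)`, then `R(G,H) ≥ (|G|-1)(χ(H)-1) + σ(H)`. -/
theorem stmt0 {α β : Type*} [Fintype α] [Fintype β]
    (G : SimpleGraph α) (H : SimpleGraph β) (hG : G.Connected)
    (k : ℕ) (hk : H.chromaticNumber = (k : ℕ∞))
    (hσ : minColorClass H k ≤ Fintype.card α) :
    (Fintype.card α - 1) * (k - 1) + minColorClass H k ≤ ramsey G H := by
  classical
  obtain _ | m := k
  · -- k = 0 : minColorClass is sInf of the empty set, i.e. 0
    have hempty : minColorClass H 0 = 0 := by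
      unfold minColorClass
      convert Nat.sInf_empty
      ext s
      simp only [Set.mem_setOf_eq, Set.mem_empty_iff_false, iff_false, not_exists]
      exact fun C i => i.elim0
    simp [hempty]
  · -- k = m + 1
    have hn : 1 ≤ Fintype.card α := Fintype.card_pos_iff.mpr hG.nonempty
    set n : ℕ := Fintype.card α with hndef
    set σ : ℕ := minColorClass H (m+1) with hσdef
    -- σ ≥ 1
    have hcol : H.Colorable (m+1) := (SimpleGraph.chromaticNumber_le_iff_colorable).1 (le_of_eq hk)
    obtain ⟨C₀⟩ := hcol
    have hSne : σ ∈ {s : ℕ | ∃ C : H.Coloring (Fin (m+1)), ∃ i : Fin (m+1),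
        s = Nat.card {v : β // C v = i}} :=
      Nat.sInf_mem ⟨Nat.card {v : β // C₀ v = 0}, C₀, 0, rfl⟩
    have hσ1 : 1 ≤ σ := by
      rcases Nat.eq_zero_or_pos σ with h0 | h
      · exfalso
        rw [h0] at hSne
        obtain ⟨C, i, hCi⟩ := hSne
        have hie : ∀ v : β, C v ≠ i := by
          intro v hv
          have hne : Nat.card {v : β // C v = i} ≠ 0 :=
            Nat.card_ne_zero.mpr ⟨⟨⟨v, hv⟩⟩, inferInstance⟩
          omega
        let C' : H.Coloring {j : Fin (m+1) // j ≠ i} :=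
          SimpleGraph.Coloring.mk (fun v => ⟨C v, hie v⟩)
            (fun {x y} h hxy => C.valid h (congrArg Subtype.val hxy))
        have hcard : Fintype.card {j : Fin (m+1) // j ≠ i} = m := by
          have := Fintype.card_subtype_compl (fun j : Fin (m+1) => j = i)
          rw [Fintype.card_subtype_eq, Fintype.card_fin] at this
          simpa using this
        have hcolm : H.Colorable m := by
          have := C'.colorable
          rwa [hcard] at this
        have hle := hcolm.chromaticNumber_le
        rw [hk] at hle
        have : (m + 1 : ℕ) ≤ m := by exact_mod_cast hle
        omega
      · exact h
    -- main bound
    obtain ⟨q, hq⟩ : ∃ q, q = (n - 1) * m := ⟨_, rfl⟩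
    have hbound : ∀ M ∈ {N : ℕ | ∀ red : SimpleGraph (Fin N),
        ContainsCopy red G ∨ ContainsCopy redᶜ H}, (n - 1) * m + σ ≤ M := by
      intro M hM
      by_contra hcon
      push_neg at hcon
      rw [← hq] at hcon
      set N : ℕ := q + (σ - 1) with hNdef
      have hMN : M ≤ N := by omega
      have hNmem : ∀ red : SimpleGraph (Fin N), ContainsCopy red G ∨ ContainsCopy redᶜ H := by
        intro red
        have hemb : Fin M ↪ Fin N := ⟨Fin.castLE hMN, Fin.castLE_injective hMN⟩
        rcases hM (SimpleGraph.comap (⇑hemb) red) with h | h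
        · exact Or.inl (containsCopy_comap red G hemb h)
        · rw [comap_compl'] at h
          exact Or.inr (containsCopy_comap redᶜ H hemb h)
      have hcardW : Fintype.card (Fin N) =
          Fintype.card ((Fin m × Fin (n - 1)) ⊕ Fin (σ - 1)) := by
        simp only [Fintype.card_fin, Fintype.card_sum, Fintype.card_prod]
        rw [hNdef, hq]; ring
      let e : Fin N ≃ ((Fin m × Fin (n - 1)) ⊕ Fin (σ - 1)) := Fintype.equivOfCardEq hcardW
      rcases hNmem (SimpleGraph.comap (⇑e.toEmbedding) (badRed m (n - 1) (σ - 1))) with h | h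
      · exact no_red_copy G hG (by omega) (by omega)
          (containsCopy_comap _ G e.toEmbedding h)
      · rw [comap_compl'] at h
        exact no_blue_copy H (by omega) (containsCopy_comap _ H e.toEmbedding h)
    have hfinal := le_csInf (ramsey_set_nonempty G H) hbound
    rw [ramsey]
    simpa using hfinal
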